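/- Let q ≥ 0 and let t ∈ ℕ with t ≥ 3. Then Σ_{k=1}^{t−1} k^{−q}/(t−k) is at most 2^q (2 + 1/(1−q)) t^{−q} log t if q < 1; at most 8 t^{−1} log t if q = 1; and at most ((2^q + 2q)/(q−1)) t^{−1} if q > 1. -/

import Mathlib

open Finset

lemma sum_Ioc_one_rpow_le_integral (q : ℝ) (hq : 0 ≤ q) (m : ℕ) (hm : 1 ≤ m) :
    ∑ k ∈ Ioc 1 m, (k : ℝ) ^ (-q) ≤ ∫ x in (1:ℝ)..(m:ℝ), x ^ (-q) := by
  have hc : ((m - 1 : ℕ) : ℝ) = (m:ℝ) - 1 := by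
    push_cast [Nat.cast_sub hm]; ring
  have hanti : AntitoneOn (fun x : ℝ => x ^ (-q))
      (Set.Icc (1:ℝ) (1 + ((m - 1 : ℕ) : ℝ))) := by
    intro x hx y hy hxy
    exact Real.rpow_le_rpow_of_nonpos (lt_of_lt_of_le one_pos hx.1) hxy (neg_nonpos.mpr hq)
  have h := hanti.sum_le_integral
  have heq : ∑ i ∈ range (m - 1), ((1:ℝ) + ((i + 1 : ℕ) : ℝ)) ^ (-q)
      = ∑ k ∈ Ioc 1 m, (k : ℝ) ^ (-q) := by
    rw [← Finset.Icc_add_one_left_eq_Ioc, ← Finset.Ico_add_one_right_eq_Icc, Finset.sum_Ico_eq_sum_range]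
    have : m + 1 - (1 + 1) = m - 1 := by omega
    rw [this]
    apply Finset.sum_congr rfl
    intro i _
    push_cast
    ring_nf
  rw [heq] at h
  have hce : (1:ℝ) + ((m - 1 : ℕ) : ℝ) = (m:ℝ) := by rw [hc]; ring
  rwa [hce] at h

lemma sum_inv_tsub_eq (t m : ℕ) (hm : m ≤ t - 1) (ht : 1 ≤ t) :
    ∑ k ∈ Ioc m (t - 1), (1 : ℝ) / ((t : ℝ) - (k : ℝ))
      = ∑ j ∈ Ioc 0 (t - 1 - m), (1 : ℝ) / (j : ℝ) := by
  apply Finset.sum_nbij' (i := fun k => t - k) (j := fun j => t - j)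
  · intro a ha
    simp only [mem_Ioc] at ha ⊢
    omega
  · intro a ha
    simp only [mem_Ioc] at ha ⊢
    omega
  · intro a ha
    simp only [mem_Ioc] at ha
    omega
  · intro a ha
    simp only [mem_Ioc] at ha
    omega
  · intro a ha
    simp only [mem_Ioc] at ha
    congr 1
    have : ((t - a : ℕ) : ℝ) = (t : ℝ) - a := by
      have : a ≤ t := by omega
      push_cast [Nat.cast_sub this]
      ring
    rw [this]

lemma sum_Ioc_inv_le (n : ℕ) :
    ∑ j ∈ Ioc 0 n, (1 : ℝ) / (j : ℝ) ≤ 1 + Real.log n := by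
  have h := harmonic_le_one_add_log n
  have heq : (harmonic n : ℝ) = ∑ j ∈ Ioc 0 n, (1 : ℝ) / (j : ℝ) := by
    rw [harmonic_eq_sum_Icc]
    push_cast
    rw [← Finset.Icc_add_one_left_eq_Ioc]
    simp [one_div]
  linarith [heq ▸ h]

set_option maxHeartbeats 2000000 in
/-- Lemma 6: estimates on `∑_{k=1}^{t-1} k^{−q}/(t−k)`. -/
theorem sum_inv_mul_rpow_bound (q : ℝ) (hq : 0 ≤ q) (t : ℕ) (ht : 3 ≤ t) :
    (q < 1 →
      ∑ k ∈ Icc 1 (t - 1), (k : ℝ) ^ (-q) / ((t : ℝ) - (k : ℝ))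
        ≤ (2 : ℝ) ^ q * (2 + 1 / (1 - q)) * (t : ℝ) ^ (-q) * Real.log t) ∧
    (q = 1 →
      ∑ k ∈ Icc 1 (t - 1), (k : ℝ) ^ (-q) / ((t : ℝ) - (k : ℝ))
        ≤ 8 * (t : ℝ)⁻¹ * Real.log t) ∧
    (1 < q →
      ∑ k ∈ Icc 1 (t - 1), (k : ℝ) ^ (-q) / ((t : ℝ) - (k : ℝ))
        ≤ ((2 : ℝ) ^ q + 2 * q) / (q - 1) * (t : ℝ)⁻¹) := by
  set m := t / 2 with hmdef
  have hm1 : 1 ≤ m := by omega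
  have hmt : m ≤ t - 1 := by omega
  have hmle : 2 * m ≤ t := by omega
  have h2m1 : t ≤ 2 * m + 1 := by omega
  have htR : (3:ℝ) ≤ (t:ℝ) := by exact_mod_cast ht
  have htpos : (0:ℝ) < t := by linarith
  have hmR : (m:ℝ) ≤ (t:ℝ) / 2 := by
    have : ((2*m : ℕ):ℝ) ≤ (t:ℝ) := by exact_mod_cast hmle
    push_cast at this; linarith
  have hmRpos : (0:ℝ) < m := by exact_mod_cast hm1
  have htmR : (t:ℝ)/2 ≤ (m:ℝ) + 1 := by
    have : ((t:ℕ):ℝ) ≤ ((2*m+1 : ℕ):ℝ) := by exact_mod_cast h2m1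
    push_cast at this; linarith
  have hlog1 : 1 ≤ Real.log t := by
    rw [Real.le_log_iff_exp_le htpos]
    calc Real.exp 1 ≤ 2.7182818286 := (Real.exp_one_lt_d9).le
      _ ≤ 3 := by norm_num
      _ ≤ t := htR
  have hlogpos : (0:ℝ) < Real.log t := lt_of_lt_of_le one_pos hlog1
  -- the split
  have hsplit : ∑ k ∈ Icc 1 (t-1), (k : ℝ) ^ (-q) / ((t : ℝ) - (k : ℝ))
      = (∑ k ∈ Ioc 0 m, (k : ℝ) ^ (-q) / ((t : ℝ) - (k : ℝ)))
        + ∑ k ∈ Ioc m (t-1), (k : ℝ) ^ (-q) / ((t : ℝ) - (k : ℝ)) := by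
    rw [← Finset.Icc_add_one_left_eq_Ioc]
    exact (Finset.sum_Ioc_consecutive _ (Nat.zero_le m) hmt).symm
  -- part A generic bound
  have hA : ∑ k ∈ Ioc 0 m, (k : ℝ) ^ (-q) / ((t : ℝ) - (k : ℝ))
      ≤ 2 / (t:ℝ) * ∑ k ∈ Ioc 0 m, (k : ℝ) ^ (-q) := by
    rw [Finset.mul_sum]
    apply Finset.sum_le_sum
    intro k hk
    obtain ⟨hk0, hkm⟩ := mem_Ioc.mp hk
    have hkR : (k:ℝ) ≤ m := by exact_mod_cast hkm
    have h1 : (t:ℝ)/2 ≤ (t:ℝ) - k := by linarith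
    have h2 : (0:ℝ) < (t:ℝ)/2 := by linarith
    calc (k : ℝ) ^ (-q) / ((t : ℝ) - (k : ℝ)) ≤ (k : ℝ) ^ (-q) / ((t:ℝ)/2) := by
          gcongr
      _ = 2 / (t:ℝ) * (k : ℝ) ^ (-q) := by
          field_simp
  -- part B bound
  have h2q : (0:ℝ) < (2:ℝ) ^ q := Real.rpow_pos_of_pos two_pos q
  have htq : (0:ℝ) < (t:ℝ) ^ (-q) := Real.rpow_pos_of_pos htpos _
  have hB : ∑ k ∈ Ioc m (t-1), (k : ℝ) ^ (-q) / ((t : ℝ) - (k : ℝ))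
      ≤ (2:ℝ) ^ q * (t:ℝ) ^ (-q) * (1 + Real.log t) := by
    have hstep : ∑ k ∈ Ioc m (t-1), (k : ℝ) ^ (-q) / ((t : ℝ) - (k : ℝ))
        ≤ ∑ k ∈ Ioc m (t-1), (2:ℝ) ^ q * (t:ℝ) ^ (-q) * (1 / ((t:ℝ) - k)) := by
      apply Finset.sum_le_sum
      intro k hk
      obtain ⟨hkm, hkt⟩ := mem_Ioc.mp hk
      have hkR : (t:ℝ)/2 ≤ (k:ℝ) := by
        have : ((m+1 : ℕ):ℝ) ≤ (k:ℝ) := by exact_mod_cast hkm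
        push_cast at this; linarith
      have hktR : (k:ℝ) ≤ (t:ℝ) - 1 := by
        have h' : ((k:ℕ):ℝ) ≤ ((t - 1 : ℕ):ℝ) := by exact_mod_cast hkt
        have : ((t-1:ℕ):ℝ) = (t:ℝ) - 1 := by
          push_cast [Nat.cast_sub (show 1 ≤ t by omega)]; ring
        linarith [this ▸ h']
      have htk : (0:ℝ) < (t:ℝ) - k := by linarith
      have hk2 : (k:ℝ) ^ (-q) ≤ ((t:ℝ)/2) ^ (-q) :=
        Real.rpow_le_rpow_of_nonpos (by linarith) hkR (neg_nonpos.mpr hq)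
      have hhalf : ((t:ℝ)/2) ^ (-q) = (2:ℝ) ^ q * (t:ℝ) ^ (-q) := by
        rw [Real.div_rpow (le_of_lt htpos) (by norm_num : (0:ℝ) ≤ 2),
          Real.rpow_neg (by norm_num : (0:ℝ) ≤ 2)]
        field_simp
      calc (k : ℝ) ^ (-q) / ((t : ℝ) - (k : ℝ)) ≤ ((t:ℝ)/2) ^ (-q) / ((t:ℝ) - k) := by
            gcongr
        _ = (2:ℝ) ^ q * (t:ℝ) ^ (-q) * (1 / ((t:ℝ) - k)) := by rw [hhalf]; ring
    rw [← Finset.mul_sum] at hstep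
    refine hstep.trans ?_
    have hhar : ∑ k ∈ Ioc m (t-1), (1:ℝ) / ((t:ℝ) - k) ≤ 1 + Real.log t := by
      rw [sum_inv_tsub_eq t m hmt (by omega)]
      refine (sum_Ioc_inv_le _).trans ?_
      have hn1 : 1 ≤ t - 1 - m := by omega
      have hnt : ((t - 1 - m : ℕ):ℝ) ≤ (t:ℝ) := by
        exact_mod_cast Nat.le_of_lt (by omega : t - 1 - m < t) |>.trans (le_refl t) 
      have : Real.log ((t - 1 - m : ℕ):ℝ) ≤ Real.log t :=
        Real.log_le_log (by exact_mod_cast hn1) hnt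
      linarith
    have hpos : (0:ℝ) ≤ (2:ℝ) ^ q * (t:ℝ) ^ (-q) := by positivity
    exact mul_le_mul_of_nonneg_left hhar hpos
  -- split of P
  have hPsplit : ∑ k ∈ Ioc 0 m, (k:ℝ)^(-q) = 1 + ∑ k ∈ Ioc 1 m, (k:ℝ)^(-q) := by
    rw [← Finset.sum_Ioc_consecutive _ (Nat.zero_le 1) hm1,
      Nat.Ioc_succ_singleton, Finset.sum_singleton]
    norm_num
  have h1m : (1:ℝ) ≤ (m:ℝ) := by exact_mod_cast hm1
  have hIoc := sum_Ioc_one_rpow_le_integral q hq m hm1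
  set L := Real.log t with hL
  refine ⟨?_, ?_, ?_⟩
  · -- case q < 1
    intro hq1
    have h1q : (0:ℝ) < 1 - q := by linarith
    have hint : ∫ x in (1:ℝ)..(m:ℝ), x ^ (-q) = ((m:ℝ)^(1-q) - 1)/(1-q) := by
      rw [integral_rpow (Or.inl (by linarith : (-1:ℝ) < -q)), Real.one_rpow,
        show -q + 1 = 1 - q by ring]
    rw [hint] at hIoc
    have hX : (0:ℝ) ≤ (m:ℝ)^(1-q) := Real.rpow_nonneg (by positivity) _
    have hu : (1:ℝ) ≤ 1/(1-q) := by rw [le_div_iff₀ h1q]; linarith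
    have hupos : (0:ℝ) < 1/(1-q) := by positivity
    have hP : ∑ k ∈ Ioc 0 m, (k:ℝ)^(-q) ≤ (m:ℝ)^(1-q)/(1-q) := by
      rw [hPsplit]
      have hsplitdiv : ((m:ℝ)^(1-q) - 1)/(1-q) = (m:ℝ)^(1-q)/(1-q) - 1/(1-q) := by
        ring
      linarith [hsplitdiv ▸ hIoc]
    have hm2 : (m:ℝ)^(1-q) ≤ ((t:ℝ)/2)^(1-q) :=
      Real.rpow_le_rpow (by positivity) hmR (by linarith)
    have htne : (t:ℝ) ≠ 0 := ne_of_gt htpos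
    have hkey : 2/(t:ℝ) * ((t:ℝ)/2)^(1-q) = (2:ℝ)^q * (t:ℝ)^(-q) := by
      have h2t : (0:ℝ) < (t:ℝ)/2 := by linarith
      rw [show (1:ℝ)-q = 1 + (-q) by ring, Real.rpow_add h2t, Real.rpow_one,
        Real.div_rpow htpos.le (by norm_num : (0:ℝ) ≤ 2),
        Real.rpow_neg (by norm_num : (0:ℝ) ≤ 2)]
      field_simp
    have hApart : ∑ k ∈ Ioc 0 m, (k : ℝ) ^ (-q) / ((t : ℝ) - (k : ℝ))
        ≤ (2:ℝ)^q * (t:ℝ)^(-q) * (1/(1-q)) := by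
      refine hA.trans ?_
      calc 2/(t:ℝ) * ∑ k ∈ Ioc 0 m, (k:ℝ)^(-q)
          ≤ 2/(t:ℝ) * (((t:ℝ)/2)^(1-q)/(1-q)) := by
            apply mul_le_mul_of_nonneg_left _ (by positivity)
            refine hP.trans ?_
            gcongr
        _ = (2/(t:ℝ) * ((t:ℝ)/2)^(1-q)) * (1/(1-q)) := by ring
        _ = (2:ℝ)^q * (t:ℝ)^(-q) * (1/(1-q)) := by rw [hkey]
    rw [hsplit]
    have hfin : (2:ℝ)^q * (t:ℝ)^(-q) * (1/(1-q)) + (2:ℝ)^q * (t:ℝ)^(-q) * (1 + L)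
        ≤ (2:ℝ)^q * (2 + 1/(1-q)) * (t:ℝ)^(-q) * L := by
      nlinarith [mul_nonneg (mul_nonneg (mul_nonneg h2q.le htq.le)
        (by linarith : (0:ℝ) ≤ L - 1)) (by positivity : (0:ℝ) ≤ 1 + 1/(1-q))]
    linarith [add_le_add hApart hB]
  · -- case q = 1
    intro hq1
    subst hq1
    have hPh : ∑ k ∈ Ioc 0 m, (k:ℝ)^(-(1:ℝ)) = (harmonic m : ℝ) := by
      rw [harmonic_eq_sum_Icc]
      push_cast
      rw [← Finset.Icc_add_one_left_eq_Ioc]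
      refine Finset.sum_congr rfl fun k _ => ?_
      rw [Real.rpow_neg_one]
    have hPle : ∑ k ∈ Ioc 0 m, (k:ℝ)^(-(1:ℝ)) ≤ 2 * L := by
      rw [hPh]
      have h1 := harmonic_le_one_add_log m
      have h2 : Real.log m ≤ L := Real.log_le_log hmRpos (by exact_mod_cast (by omega : m ≤ t))
      linarith
    rw [hsplit]
    rw [Real.rpow_one, Real.rpow_neg_one] at hB
    have hAle : ∑ k ∈ Ioc 0 m, (k : ℝ) ^ (-(1:ℝ)) / ((t : ℝ) - (k : ℝ))
        ≤ 2/(t:ℝ) * (2*L) := by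
      refine hA.trans (mul_le_mul_of_nonneg_left hPle (by positivity))
    have hinv : (0:ℝ) < (t:ℝ)⁻¹ := by positivity
    have h5 : 2/(t:ℝ)*(2*L) = 4 * ((t:ℝ)⁻¹*L) := by rw [div_eq_mul_inv]; ring
    have h6 : 2*(t:ℝ)⁻¹*(1+L) ≤ 4*((t:ℝ)⁻¹*L) := by
      nlinarith [mul_nonneg hinv.le (by linarith : (0:ℝ) ≤ L-1)]
    calc ∑ k ∈ Ioc 0 m, (k : ℝ) ^ (-(1:ℝ)) / ((t : ℝ) - (k : ℝ))
          + ∑ k ∈ Ioc m (t-1), (k : ℝ) ^ (-(1:ℝ)) / ((t : ℝ) - (k : ℝ))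
        ≤ 2/(t:ℝ)*(2*L) + 2*(t:ℝ)⁻¹*(1+L) := add_le_add hAle hB
      _ ≤ 4*((t:ℝ)⁻¹*L) + 4*((t:ℝ)⁻¹*L) := add_le_add (le_of_eq h5) h6
      _ = 8 * (t:ℝ)⁻¹ * L := by ring
  · -- case q > 1
    intro hq1
    have hs : (0:ℝ) < q - 1 := by linarith
    have hnot : (0:ℝ) ∉ Set.uIcc (1:ℝ) (m:ℝ) := by
      rw [Set.uIcc_of_le h1m]
      intro h
      exact absurd h.1 (by norm_num)
    have hint : ∫ x in (1:ℝ)..(m:ℝ), x ^ (-q) = ((m:ℝ)^(1-q) - 1)/(1-q) := by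
      rw [integral_rpow (Or.inr ⟨by intro h; apply hs.ne'; linarith [neg_injective h], hnot⟩),
        Real.one_rpow, show -q + 1 = 1 - q by ring]
    rw [hint] at hIoc
    have hX : (0:ℝ) ≤ (m:ℝ)^(1-q) := Real.rpow_nonneg (by positivity) _
    have hP : ∑ k ∈ Ioc 0 m, (k:ℝ)^(-q) ≤ 1 + 1/(q-1) := by
      rw [hPsplit]
      have he : ((m:ℝ)^(1-q) - 1)/(1-q) = (1 - (m:ℝ)^(1-q))/(q-1) := by
        rw [div_eq_div_iff (by linarith) (by linarith)]
        ring
      rw [he] at hIoc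
      have : (1 - (m:ℝ)^(1-q))/(q-1) ≤ 1/(q-1) := by gcongr; linarith
      linarith
    -- key exponential estimate
    have htq1 : (0:ℝ) < (t:ℝ)^(q-1) := Real.rpow_pos_of_pos htpos _
    have hkey : (q-1) * (1 + L) ≤ (t:ℝ)^(q-1) := by
      have hdef : (t:ℝ)^(q-1) = Real.exp (Real.log t * (q-1)) :=
        Real.rpow_def_of_pos htpos _
      have hsq : Real.exp (Real.log t * (q-1)) = (Real.exp (L*(q-1)/2))^2 := by
        rw [sq, ← Real.exp_add, ← hL]
        ring_nf
      have h3 : 1 + L*(q-1)/2 ≤ Real.exp (L*(q-1)/2) := by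
        have := Real.add_one_le_exp (L*(q-1)/2)
        linarith
      have h4 : (1 + L*(q-1)/2)^2 ≤ (Real.exp (L*(q-1)/2))^2 := by
        apply pow_le_pow_left₀ (by positivity) h3
      rw [hdef, hsq]
      nlinarith [sq_nonneg (q - 1 - 2),
        mul_nonneg (mul_nonneg hs.le hs.le)
          (by nlinarith : (0:ℝ) ≤ L^2 - 1)]
    have htinv : (0:ℝ) < (t:ℝ)⁻¹ := by positivity
    have hBle : ∑ k ∈ Ioc m (t-1), (k : ℝ) ^ (-q) / ((t : ℝ) - (k : ℝ))
        ≤ (2:ℝ)^q * ((t:ℝ)⁻¹ / (q-1)) := by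
      refine hB.trans ?_
      have hdecomp : (t:ℝ)^(-q) = ((t:ℝ)^(q-1))⁻¹ * (t:ℝ)⁻¹ := by
        rw [← Real.rpow_neg htpos.le, ← Real.rpow_neg_one (t:ℝ),
          ← Real.rpow_add htpos]
        congr 1
        ring
      rw [hdecomp]
      rw [show (2:ℝ)^q * (((t:ℝ)^(q-1))⁻¹ * (t:ℝ)⁻¹) * (1 + L)
          = (2:ℝ)^q * ((t:ℝ)⁻¹ * ((1+L) / (t:ℝ)^(q-1))) by ring]
      apply mul_le_mul_of_nonneg_left _ h2q.le
      rw [div_eq_mul_one_div ((t:ℝ)⁻¹) (q-1)]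
      apply mul_le_mul_of_nonneg_left _ htinv.le
      rw [div_le_div_iff₀ htq1 hs]
      nlinarith [hkey]
    have hAle : ∑ k ∈ Ioc 0 m, (k : ℝ) ^ (-q) / ((t : ℝ) - (k : ℝ))
        ≤ 2/(t:ℝ) * (1 + 1/(q-1)) :=
      hA.trans (mul_le_mul_of_nonneg_left hP (by positivity))
    rw [hsplit]
    have hfin : 2/(t:ℝ) * (1 + 1/(q-1)) + (2:ℝ)^q * ((t:ℝ)⁻¹ / (q-1))
        = ((2:ℝ)^q + 2*q)/(q-1) * (t:ℝ)⁻¹ := by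
      field_simp
      ring
    linarith [add_le_add hAle hBle]
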